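/- Let ρ₁, ρ₂, ρ₃ be complex numbers with ρ₁ + ρ₂ + ρ₃ = 0. Define ξ = (1/4)(|ρ₁|² + |ρ₂|² + |ρ₃|²), χ = (1/4)(|ρ₁|⁴ + |ρ₂|⁴ + |ρ₃|⁴) and α = (1/2)|ρ₁² + ρ₂² + ρ₃²|. Then χ ≥ (1/2)α² ≥ 0 and ξ² ≥ (1/4)α². -/

import Mathlib

/-- The invariant-level super-energy inequalities `χ ≥ (1/2)α² ≥ 0` and
`ξ² ≥ (1/4)α²` on the Bel–Robinson scalar invariants. -/
theorem belRobinson_invariant_inequalities (ρ₁ ρ₂ ρ₃ : ℂ) (hsum : ρ₁ + ρ₂ + ρ₃ = 0)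
    (ξ χ α : ℝ)
    (hξ : ξ = (1/4) * (‖ρ₁‖ ^ 2 + ‖ρ₂‖ ^ 2 + ‖ρ₃‖ ^ 2))
    (hχ : χ = (1/4) * (‖ρ₁‖ ^ 4 + ‖ρ₂‖ ^ 4 + ‖ρ₃‖ ^ 4))
    (hα : α = (1/2) * ‖ρ₁ ^ 2 + ρ₂ ^ 2 + ρ₃ ^ 2‖) :
    χ ≥ (1/2) * α ^ 2 ∧ (1/2) * α ^ 2 ≥ 0 ∧ ξ ^ 2 ≥ (1/4) * α ^ 2 := by
  have h3 : ρ₃ = -ρ₁ - ρ₂ := by linear_combination hsum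
  -- key identity: (Σρ²)² = 2 Σρ⁴ when Σρ = 0
  have key : (ρ₁ ^ 2 + ρ₂ ^ 2 + ρ₃ ^ 2) ^ 2 = 2 * (ρ₁ ^ 4 + ρ₂ ^ 4 + ρ₃ ^ 4) := by
    subst h3; ring
  have habs : ‖ρ₁ ^ 2 + ρ₂ ^ 2 + ρ₃ ^ 2‖ ^ 2
      = 2 * ‖ρ₁ ^ 4 + ρ₂ ^ 4 + ρ₃ ^ 4‖ := by
    rw [← norm_pow, key, norm_mul]
    norm_num
  have htri4 : ‖ρ₁ ^ 4 + ρ₂ ^ 4 + ρ₃ ^ 4‖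
      ≤ ‖ρ₁‖ ^ 4 + ‖ρ₂‖ ^ 4 + ‖ρ₃‖ ^ 4 := by
    calc ‖ρ₁ ^ 4 + ρ₂ ^ 4 + ρ₃ ^ 4‖
        ≤ ‖ρ₁ ^ 4 + ρ₂ ^ 4‖ + ‖ρ₃ ^ 4‖ :=
          norm_add_le _ _
      _ ≤ ‖ρ₁ ^ 4‖ + ‖ρ₂ ^ 4‖ + ‖ρ₃ ^ 4‖ := by
          linarith [norm_add_le (ρ₁ ^ 4) (ρ₂ ^ 4)]
      _ = ‖ρ₁‖ ^ 4 + ‖ρ₂‖ ^ 4 + ‖ρ₃‖ ^ 4 := by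
          simp [map_pow]
  have htri2 : ‖ρ₁ ^ 2 + ρ₂ ^ 2 + ρ₃ ^ 2‖
      ≤ ‖ρ₁‖ ^ 2 + ‖ρ₂‖ ^ 2 + ‖ρ₃‖ ^ 2 := by
    calc ‖ρ₁ ^ 2 + ρ₂ ^ 2 + ρ₃ ^ 2‖
        ≤ ‖ρ₁ ^ 2 + ρ₂ ^ 2‖ + ‖ρ₃ ^ 2‖ :=
          norm_add_le _ _
      _ ≤ ‖ρ₁ ^ 2‖ + ‖ρ₂ ^ 2‖ + ‖ρ₃ ^ 2‖ := by
          linarith [norm_add_le (ρ₁ ^ 2) (ρ₂ ^ 2)]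
      _ = ‖ρ₁‖ ^ 2 + ‖ρ₂‖ ^ 2 + ‖ρ₃‖ ^ 2 := by
          simp [map_pow]
  have hαnn : 0 ≤ ‖ρ₁ ^ 2 + ρ₂ ^ 2 + ρ₃ ^ 2‖ := norm_nonneg _
  refine ⟨?_, ?_, ?_⟩
  · rw [hχ, hα]; nlinarith [habs, htri4]
  · rw [hα]; positivity
  · rw [hξ, hα]; nlinarith [htri2, hαnn]
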